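/- arXiv:0704.3007 — 2 statements merged into one kernel-verified Lean document; each statement's English description precedes it below -/
import Mathlib

section
/- Let E be a formal Laurent series Σ_{j ≤ 0} a_j τ^j with a_0 = 1 satisfying the growth condition of k (|a_j| ≤ C^{-j}(−j)! for some C > 0, all j ≤ 0). Then E is invertible in k and its inverse E^{-1} = Σ_{j ≤ 0} b_j τ^j also satisfies b_0 = 1 and the growth condition: there exists C' > 0 with |b_j| ≤ C'^{-j}(−j)! for all j ≤ 0. -/
/- Model: `ℂ[[τ⁻¹]][τ]` is the field `LaurentSeries ℂ` in the variable `t = τ⁻¹`;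
`a.coeff i` is the coefficient `a_j` of `τ^j` with `j = -i`.  A series
`E = Σ_{j ≤ 0} a_j τ^j` has `E.coeff i = 0` for `i < 0` and constant term `E.coeff 0`. -/

def kSet : Set (LaurentSeries ℂ) :=
  {a | ∃ C : ℝ, 0 < C ∧ ∀ i : ℕ, ‖a.coeff (i : ℤ)‖ ≤ C ^ i * (i.factorial : ℝ)}

lemma antidiag_sum_aux {n : ℕ} (g : ℕ → ℕ → ℂ) :
    ∑ x ∈ Finset.HasAntidiagonal.antidiagonal n, (if x.2 < n then g x.1 x.2 else 0) =
      ∑ m ∈ Finset.range n, g (n - m) m := by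
  rw [← Finset.Nat.sum_antidiagonal_swap]
  simp only [Prod.snd_swap, Prod.fst_swap]
  rw [Finset.Nat.sum_antidiagonal_eq_sum_range_succ_mk, Finset.sum_range_succ,
    if_neg (lt_irrefl n), add_zero]
  exact Finset.sum_congr rfl fun m hm => if_pos (Finset.mem_range.mp hm)

lemma factorial_mul_factorial_le (m n : ℕ) (h : m ≤ n) :
    ((n - m).factorial : ℝ) * m.factorial ≤ n.factorial := by
  have := Nat.factorial_mul_factorial_dvd_factorial_add (n - m) m
  rw [Nat.sub_add_cancel h] at this
  exact_mod_cast Nat.le_of_dvd n.factorial_pos this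

/-- if `E = Σ_{j ≤ 0} a_j τ^j` has constant term `1` and satisfies the
growth condition of `k`, then `E` is invertible in `k`, and its inverse again is of
the form `Σ_{j ≤ 0} b_j τ^j` with `b_0 = 1` and satisfies the growth condition. -/
theorem inv_of_unit_constant_term (E : LaurentSeries ℂ)
    (hord : ∀ i : ℤ, i < 0 → E.coeff i = 0)
    (hconst : E.coeff 0 = 1)
    (hE : E ∈ kSet) :
    E * E⁻¹ = 1 ∧ E⁻¹ ∈ kSet ∧
    (∀ i : ℤ, i < 0 → (E⁻¹).coeff i = 0) ∧ (E⁻¹).coeff 0 = 1 := by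
  classical
  set F : PowerSeries ℂ := PowerSeries.mk fun n => E.coeff n with hFdef
  have hFcoeff : ∀ n : ℕ, PowerSeries.coeff n F = E.coeff n := fun n =>
    PowerSeries.coeff_mk _ _
  have hF : ((F : PowerSeries ℂ) : LaurentSeries ℂ) = E := by
    ext i
    rw [PowerSeries.coeff_coe]
    split_ifs with h
    · exact (hord i h).symm
    · push_neg at h
      rw [hFcoeff, Int.natAbs_of_nonneg h]
  have hc : PowerSeries.constantCoeff F = 1 := by
    rw [← PowerSeries.coeff_zero_eq_constantCoeff, hFcoeff]
    exact_mod_cast hconst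
  have hc' : PowerSeries.constantCoeff F ≠ 0 := by rw [hc]; exact one_ne_zero
  have hmul : F * F⁻¹ = 1 := PowerSeries.mul_inv_cancel F hc'
  have hcast : E * ((F⁻¹ : PowerSeries ℂ) : LaurentSeries ℂ) = 1 := by
    rw [← hF, ← PowerSeries.coe_mul, hmul, PowerSeries.coe_one]
  have hinv : E⁻¹ = ((F⁻¹ : PowerSeries ℂ) : LaurentSeries ℂ) :=
    inv_eq_of_mul_eq_one_right hcast
  have hEmul : E * E⁻¹ = 1 := by rw [hinv]; exact hcast
  refine ⟨hEmul, ?_, ?_, ?_⟩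
  · -- growth bound
    obtain ⟨C, hC, hb⟩ := hE
    set D : ℝ := max C 1 with hD
    have hD1 : (1 : ℝ) ≤ D := le_max_right _ _
    have hD0 : (0 : ℝ) < D := lt_of_lt_of_le one_pos hD1
    have ha : ∀ i : ℕ, ‖PowerSeries.coeff i F‖ ≤ D ^ i * i.factorial := by
      intro i
      have h1 : ‖PowerSeries.coeff i F‖ ≤ C ^ i * i.factorial := by
        rw [hFcoeff]; exact hb i
      refine h1.trans (mul_le_mul_of_nonneg_right
        (pow_le_pow_left₀ hC.le (le_max_left _ _) i) (Nat.cast_nonneg _))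
    have key : ∀ n : ℕ, ‖PowerSeries.coeff n F⁻¹‖ ≤ (2 * D) ^ n * n.factorial := by
      intro n
      induction n using Nat.strong_induction_on with
      | _ n ih =>
        rcases Nat.eq_zero_or_pos n with rfl | hn
        · simp [PowerSeries.coeff_zero_eq_constantCoeff, hc]
        have hrec : PowerSeries.coeff n F⁻¹ =
            -∑ m ∈ Finset.range n,
              PowerSeries.coeff (n - m) F * PowerSeries.coeff m F⁻¹ := by
          rw [PowerSeries.coeff_inv, if_neg hn.ne', hc, inv_one, neg_one_mul,
            antidiag_sum_aux (fun a b => PowerSeries.coeff a F * PowerSeries.coeff b F⁻¹)]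
        rw [hrec, norm_neg]
        calc ‖∑ m ∈ Finset.range n,
              PowerSeries.coeff (n - m) F * PowerSeries.coeff m F⁻¹‖
            ≤ ∑ m ∈ Finset.range n,
              ‖PowerSeries.coeff (n - m) F * PowerSeries.coeff m F⁻¹‖ :=
              norm_sum_le _ _
          _ ≤ ∑ m ∈ Finset.range n, D ^ n * 2 ^ m * n.factorial := by
              refine Finset.sum_le_sum fun m hm => ?_
              have hmn : m < n := Finset.mem_range.mp hm
              rw [norm_mul]
              calc ‖PowerSeries.coeff (n - m) F‖ * ‖PowerSeries.coeff m F⁻¹‖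
                  ≤ (D ^ (n - m) * (n - m).factorial) * ((2 * D) ^ m * m.factorial) :=
                    mul_le_mul (ha (n - m)) (ih m hmn) (norm_nonneg _)
                      (by positivity)
                _ = (D ^ (n - m) * D ^ m) * 2 ^ m *
                      (((n - m).factorial : ℝ) * m.factorial) := by
                    rw [mul_pow]; ring
                _ ≤ D ^ n * 2 ^ m * n.factorial := by
                    rw [← pow_add, Nat.sub_add_cancel hmn.le]
                    have := factorial_mul_factorial_le m n hmn.le
                    have h2 : (0:ℝ) < D ^ n * 2 ^ m := by positivity
                    exact mul_le_mul_of_nonneg_left this h2.le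
          _ = D ^ n * n.factorial * ∑ m ∈ Finset.range n, (2 : ℝ) ^ m := by
              rw [Finset.mul_sum]; exact Finset.sum_congr rfl fun m _ => by ring
          _ ≤ D ^ n * n.factorial * 2 ^ n := by
              have hg : ∑ m ∈ Finset.range n, (2 : ℝ) ^ m ≤ 2 ^ n := by
                rw [geom_sum_eq (by norm_num : (2 : ℝ) ≠ 1)]
                norm_num
              have h2 : (0:ℝ) ≤ D ^ n * n.factorial := by positivity
              exact mul_le_mul_of_nonneg_left hg h2
          _ = (2 * D) ^ n * n.factorial := by rw [mul_pow]; ring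
    refine ⟨2 * D, by positivity, fun i => ?_⟩
    rw [hinv, PowerSeries.coeff_coe, if_neg (not_lt.mpr (Int.natCast_nonneg i)),
      Int.natAbs_natCast]
    exact key i
  · intro i hi
    rw [hinv, PowerSeries.coeff_coe, if_pos hi]
  · rw [hinv]
    have : ((0 : ℤ) : ℤ) = ((0 : ℕ) : ℤ) := rfl
    rw [PowerSeries.coeff_coe, if_neg (lt_irrefl 0), Int.natAbs_zero,
      PowerSeries.coeff_zero_eq_constantCoeff, PowerSeries.constantCoeff_inv, hc, inv_one]
end

section
/- For a series p(ξ) = Σ_{j ≤ 0} p_j ξ^{j} of holomorphic functions homogeneous of degree j on an open cone, the Borel-type estimate sup_K |p_j| ≤ C_K^{-j}(−j)! for all j ≤ 0 is stable under the transposition formula: if ᵗp(x;ξ) = Σ_{α}((−1)^{|α|}/α!) ∂_ξ^α ∂_x^α p(x;−ξ) is computed degreewise (each homogeneous component of ᵗp is a finite sum of derivatives of components of p of higher degree), then in the single-variable polynomial model where p_j ∈ ℂ[x,ξ] with deg bounds fixed, the components of ᵗp satisfy estimates of the same type with a possibly larger constant. -/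
open MvPolynomial

/- Model: polynomials in `(x, ξ) ∈ ℂⁿ × ℂⁿ` are `MvPolynomial (Fin n ⊕ Fin n) ℂ`
with `x i = X (Sum.inl i)`, `ξ i = X (Sum.inr i)`; `K` is the closed polydisc of
radius `R`. -/

/-- Iterated partial derivative `∂_x^α`. -/
noncomputable def DX {R : Type} [CommRing R] (n : ℕ) (α : Fin n →₀ ℕ) :
    Module.End R (MvPolynomial (Fin n ⊕ Fin n) R) :=
  ((List.finRange n).map fun i =>
    ((pderiv (Sum.inl i : Fin n ⊕ Fin n)).toLinearMap) ^ (α i)).prod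

/-- Iterated partial derivative `∂_ξ^α`. -/
noncomputable def DXi {R : Type} [CommRing R] (n : ℕ) (α : Fin n →₀ ℕ) :
    Module.End R (MvPolynomial (Fin n ⊕ Fin n) R) :=
  ((List.finRange n).map fun i =>
    ((pderiv (Sum.inr i : Fin n ⊕ Fin n)).toLinearMap) ^ (α i)).prod

/-- The substitution `ξ ↦ -ξ`. -/
noncomputable def negXi (n : ℕ) :
    MvPolynomial (Fin n ⊕ Fin n) ℂ →ₐ[ℂ] MvPolynomial (Fin n ⊕ Fin n) ℂ :=
  aeval (Sum.elim (fun i => X (Sum.inl i)) (fun i => -X (Sum.inr i)))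

/-- The degree-`j` component of the transposition:
`(ᵗp)_j = Σ_α ((-1)^{|α|}/α!) ∂_ξ^α ∂_x^α p_{j+|α|}(x; -ξ)`. -/
noncomputable def transpComp (n : ℕ) (p : ℤ → MvPolynomial (Fin n ⊕ Fin n) ℂ) (j : ℤ) :
    MvPolynomial (Fin n ⊕ Fin n) ℂ :=
  ∑ᶠ α : Fin n →₀ ℕ,
    (((-1 : ℂ) ^ (α.sum fun _ k => k)) * (α.prod fun _ k => (k.factorial : ℂ))⁻¹) •
      DXi n α (DX n α (negXi n (p (j + (α.sum fun _ k => (k : ℤ))))))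

/-! ### Auxiliary material -/

abbrev σn (n : ℕ) := Fin n ⊕ Fin n
def Good (n D : ℕ) (f : MvPolynomial (σn n) ℂ) : Prop := ∀ i, degreeOf i f ≤ D
def Bdd (n : ℕ) (M : ℝ) (f : MvPolynomial (σn n) ℂ) : Prop := ∀ s, ‖coeff s f‖ ≤ M

lemma coeff_pderiv' {σ : Type*} [DecidableEq σ] (f : MvPolynomial σ ℂ) (v : σ) (t : σ →₀ ℕ) :
    coeff t (pderiv v f) = ((t v : ℂ) + 1) * coeff (t + Finsupp.single v 1) f := by
  induction f using MvPolynomial.induction_on' with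
  | add p q hp hq => simp [hp, hq, mul_add]
  | monomial u a =>
    rw [pderiv_monomial, coeff_monomial, coeff_monomial]
    by_cases h : u = t + Finsupp.single v 1
    · subst h
      have h1 : t + Finsupp.single v 1 - Finsupp.single v 1 = t := by
        ext i; simp [Finsupp.tsub_apply]
      rw [if_pos h1]
      simp only [Finsupp.coe_add, Pi.add_apply, Finsupp.single_eq_same]
      push_cast; ring
    · rw [if_neg h]
      by_cases h3 : u - Finsupp.single v 1 = t
      · rw [if_pos h3]
        have h4 : u v = 0 := by
          by_contra h5
          apply h
          rw [← h3]
          ext i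
          simp only [Finsupp.coe_add, Pi.add_apply, Finsupp.tsub_apply, Finsupp.single_apply]
          split <;> rename_i hvi
          · subst hvi; omega
          · omega
        simp [h4]
      · rw [if_neg h3]; ring

lemma coeff_ne_zero_le {n D : ℕ} {f : MvPolynomial (σn n) ℂ} (hf : Good n D f)
    {s : σn n →₀ ℕ} (hs : coeff s f ≠ 0) (i : σn n) : s i ≤ D :=
  (degreeOf_le_iff.mp (hf i)) s (mem_support_iff.mpr hs)

lemma good_pderiv {n D : ℕ} {f : MvPolynomial (σn n) ℂ} (hf : Good n D f) (v : σn n) :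
    Good n D (pderiv v f) := by
  intro i
  rw [degreeOf_le_iff]
  intro s hs
  rw [mem_support_iff, coeff_pderiv'] at hs
  have h2 : coeff (s + Finsupp.single v 1) f ≠ 0 := fun h => hs (by simp [h])
  have := coeff_ne_zero_le hf h2 i
  simp only [Finsupp.coe_add, Pi.add_apply] at this
  omega

lemma bdd_pderiv {n D : ℕ} {f : MvPolynomial (σn n) ℂ} {M : ℝ} (hM : 0 ≤ M)
    (hf : Good n D f) (hb : Bdd n M f) (v : σn n) : Bdd n ((D : ℝ) * M) (pderiv v f) := by
  intro s
  rw [coeff_pderiv']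
  by_cases h : coeff (s + Finsupp.single v 1) f = 0
  · simp [h]; positivity
  · have hle : s v + 1 ≤ D := by
      have := coeff_ne_zero_le hf h v
      simp only [Finsupp.coe_add, Pi.add_apply, Finsupp.single_eq_same] at this
      omega
    rw [norm_mul]
    have h1 : ‖((s v : ℂ) + 1)‖ ≤ (D : ℝ) := by
      rw [show ((s v : ℂ) + 1) = ((s v + 1 : ℕ) : ℂ) by push_cast; ring]
      rw [Complex.norm_natCast]
      exact_mod_cast hle
    calc ‖((s v : ℂ) + 1)‖ * ‖coeff (s + Finsupp.single v 1) f‖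
        ≤ (D : ℝ) * M := by
          apply mul_le_mul h1 (hb _) (norm_nonneg _) (by positivity)

lemma pderiv_eq_zero_of_degreeOf_eq_zero {σ : Type*} {f : MvPolynomial σ ℂ} {v : σ}
    (h : degreeOf v f = 0) : pderiv v f = 0 := by
  classical
  ext t
  rw [coeff_pderiv', coeff_zero]
  have : coeff (t + Finsupp.single v 1) f = 0 := by
    by_contra hc
    have := degreeOf_le_iff.mp h.le _ (mem_support_iff.mpr hc)
    simp at this
  simp [this]

lemma degreeOf_pderiv_lt {σ : Type*} {f : MvPolynomial σ ℂ} {v : σ}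
    (h : 0 < degreeOf v f) : degreeOf v (pderiv v f) < degreeOf v f := by
  classical
  have : degreeOf v (pderiv v f) ≤ degreeOf v f - 1 := by
    rw [degreeOf_le_iff]
    intro s hs
    rw [mem_support_iff, coeff_pderiv'] at hs
    have h2 : coeff (s + Finsupp.single v 1) f ≠ 0 := fun h0 => hs (by simp [h0])
    have := (degreeOf_le_iff (n := v)).mp le_rfl _ (mem_support_iff.mpr h2)
    simp only [Finsupp.coe_add, Pi.add_apply, Finsupp.single_eq_same] at this
    omega
  omega

lemma pderiv_pow_eq_zero {n : ℕ} {v : σn n} :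
    ∀ (k : ℕ) (f : MvPolynomial (σn n) ℂ), degreeOf v f < k →
      (((pderiv v).toLinearMap) ^ k) f = 0 := by
  intro k
  induction k with
  | zero => intro f hf; omega
  | succ k ih =>
    intro f hf
    rw [pow_succ, Module.End.mul_apply]
    by_cases h0 : degreeOf v f = 0
    · rw [show (pderiv v).toLinearMap f = pderiv v f from rfl,
        pderiv_eq_zero_of_degreeOf_eq_zero h0, map_zero]
    · rw [show (pderiv v).toLinearMap f = pderiv v f from rfl]
      exact ih _ (by have := degreeOf_pderiv_lt (f := f) (v := v) (by omega); omega)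

lemma good_pderiv_pow {n D : ℕ} {v : σn n} (k : ℕ) {f : MvPolynomial (σn n) ℂ}
    (hf : Good n D f) : Good n D ((((pderiv v).toLinearMap) ^ k) f) := by
  induction k with
  | zero => simpa using hf
  | succ k ih => rw [pow_succ', Module.End.mul_apply]; exact good_pderiv ih v

lemma bdd_pderiv_pow {n D : ℕ} {v : σn n} (k : ℕ) {f : MvPolynomial (σn n) ℂ} {M : ℝ}
    (hM : 0 ≤ M) (hf : Good n D f) (hb : Bdd n M f) :
    Bdd n ((D : ℝ) ^ k * M) ((((pderiv v).toLinearMap) ^ k) f) := by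
  induction k with
  | zero => simpa using hb
  | succ k ih =>
    have hps : (((pderiv v).toLinearMap) ^ (k + 1)) f
        = pderiv v ((((pderiv v).toLinearMap) ^ k) f) := by
      rw [pow_succ', Module.End.mul_apply]; rfl
    rw [hps]
    have h1 := bdd_pderiv (M := (D : ℝ) ^ k * M) (by positivity) (good_pderiv_pow k hf) ih v
    intro s
    calc ‖coeff s _‖ ≤ (D : ℝ) * ((D : ℝ) ^ k * M) := h1 s
    _ = (D : ℝ) ^ (k + 1) * M := by ring

/-- generic product over a list of indices, variable selector `u`, exponents `e`. -/
lemma good_prodlist {n D : ℕ} (u : Fin n → σn n) (e : Fin n → ℕ) :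
    ∀ (l : List (Fin n)) {f : MvPolynomial (σn n) ℂ}, Good n D f →
      Good n D (((l.map fun i => ((pderiv (u i)).toLinearMap) ^ (e i)).prod) f) := by
  intro l
  induction l with
  | nil => intro f hf; simpa using hf
  | cons a t ih =>
    intro f hf
    rw [List.map_cons, List.prod_cons, Module.End.mul_apply]
    exact good_pderiv_pow _ (ih hf)

lemma bdd_prodlist {n D : ℕ} (u : Fin n → σn n) (e : Fin n → ℕ) :
    ∀ (l : List (Fin n)) {f : MvPolynomial (σn n) ℂ} {M : ℝ}, 0 ≤ M → Good n D f → Bdd n M f →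
      Bdd n ((D : ℝ) ^ ((l.map e).sum) * M)
        (((l.map fun i => ((pderiv (u i)).toLinearMap) ^ (e i)).prod) f) := by
  intro l
  induction l with
  | nil => intro f M hM hf hb; simpa using hb
  | cons a t ih =>
    intro f M hM hf hb
    have hps : (((a :: t).map fun i => ((pderiv (u i)).toLinearMap) ^ (e i)).prod) f
        = (((pderiv (u a)).toLinearMap) ^ (e a))
          (((t.map fun i => ((pderiv (u i)).toLinearMap) ^ (e i)).prod) f) := by
      rw [List.map_cons, List.prod_cons, Module.End.mul_apply]
    rw [hps]
    have h1 := bdd_pderiv_pow (v := u a) (e a) (by positivity)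
      (good_prodlist u e t hf) (ih hM hf hb)
    intro s
    calc ‖coeff s _‖ ≤ (D : ℝ) ^ (e a) * ((D : ℝ) ^ ((t.map e).sum) * M) := h1 s
    _ = (D : ℝ) ^ (((a :: t).map e).sum) * M := by
        rw [List.map_cons, List.sum_cons, pow_add]; ring

lemma zero_prodlist {n D : ℕ} (u : Fin n → σn n) (e : Fin n → ℕ) :
    ∀ (l : List (Fin n)) {f : MvPolynomial (σn n) ℂ}, Good n D f →
      ∀ i₀ ∈ l, D < e i₀ →
      (((l.map fun i => ((pderiv (u i)).toLinearMap) ^ (e i)).prod) f) = 0 := by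
  intro l
  induction l with
  | nil => intro f hf i₀ h; simp at h
  | cons a t ih =>
    intro f hf i₀ hmem hbig
    rw [List.map_cons, List.prod_cons, Module.End.mul_apply]
    rcases List.mem_cons.mp hmem with h | h
    · subst h
      exact pderiv_pow_eq_zero _ _ (lt_of_le_of_lt (good_prodlist u e t hf (u i₀)) hbig)
    · rw [ih hf i₀ h hbig, map_zero]

/-! ### `negXi` lemmas -/

noncomputable def sgn (n : ℕ) : σn n → ℂ := Sum.elim (fun _ => (1 : ℂ)) fun _ => -1

noncomputable def eps (n : ℕ) (t : σn n →₀ ℕ) : ℂ := t.prod fun v k => (sgn n v) ^ k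

lemma norm_sgn {n : ℕ} (v : σn n) : ‖sgn n v‖ = 1 := by
  cases v <;> simp [sgn]

lemma norm_eps {n : ℕ} (t : σn n →₀ ℕ) : ‖eps n t‖ = 1 := by
  rw [eps, Finsupp.prod, norm_prod]
  apply Finset.prod_eq_one
  intro v _
  rw [norm_pow, norm_sgn, one_pow]

lemma negXi_monomial {n : ℕ} (u : σn n →₀ ℕ) (a : ℂ) :
    negXi n (monomial u a) = eps n u • monomial u a := by
  rw [negXi, aeval_monomial]
  have h1 : ∀ v : σn n, (Sum.elim (fun i => X (Sum.inl i))
      (fun i => -X (Sum.inr i)) v : MvPolynomial (σn n) ℂ) = sgn n v • X v := by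
    intro v; cases v <;> simp [sgn]
  have h2 : (u.prod fun v k => (Sum.elim (fun i => X (Sum.inl i))
      (fun i => -X (Sum.inr i)) v : MvPolynomial (σn n) ℂ) ^ k)
      = C (eps n u) * u.prod fun v k => (X v : MvPolynomial (σn n) ℂ) ^ k := by
    rw [eps, Finsupp.prod, Finsupp.prod, Finsupp.prod]
    rw [map_prod, ← Finset.prod_mul_distrib]
    apply Finset.prod_congr rfl
    intro v _
    rw [h1 v, smul_pow, smul_eq_C_mul]
  rw [h2, monomial_eq, algebraMap_eq, smul_eq_C_mul]
  ring

lemma coeff_negXi {n : ℕ} (f : MvPolynomial (σn n) ℂ) (t : σn n →₀ ℕ) :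
    coeff t (negXi n f) = eps n t * coeff t f := by
  induction f using MvPolynomial.induction_on' with
  | add p q hp hq => simp [hp, hq, mul_add]
  | monomial u a =>
    rw [negXi_monomial, coeff_smul, coeff_monomial]
    by_cases h : u = t
    · subst h; simp [smul_eq_mul]
    · simp [h]

lemma good_negXi {n D : ℕ} {f : MvPolynomial (σn n) ℂ} (hf : Good n D f) :
    Good n D (negXi n f) := by
  intro i
  rw [degreeOf_le_iff]
  intro s hs
  rw [mem_support_iff, coeff_negXi] at hs
  have h2 : coeff s f ≠ 0 := by
    intro h0; exact hs (by simp [h0])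
  exact degreeOf_le_iff.mp (hf i) s (mem_support_iff.mpr h2)

lemma bdd_negXi {n : ℕ} {f : MvPolynomial (σn n) ℂ} {M : ℝ} (hb : Bdd n M f) :
    Bdd n M (negXi n f) := by
  intro s
  rw [coeff_negXi, norm_mul, norm_eps, one_mul]
  exact hb s

lemma eval_negXi {n : ℕ} (q : MvPolynomial (σn n) ℂ) (z : σn n → ℂ) :
    eval z (negXi n q) = eval (Sum.elim (fun i => z (Sum.inl i)) fun i => -z (Sum.inr i)) q := by
  induction q using MvPolynomial.induction_on with
  | C a => simp [negXi]
  | add p q hp hq => simp only [map_add, hp, hq]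
  | mul_X p v hp =>
    rw [map_mul, map_mul, hp]
    cases v with
    | inl i => simp [negXi]
    | inr i => simp [negXi]

/-! ### analytic vanishing -/

lemma eval_analytic {σ : Type*} [Fintype σ] (q : MvPolynomial σ ℂ) :
    AnalyticOnNhd ℂ (fun z : σ → ℂ => eval z q) Set.univ := by
  induction q using MvPolynomial.induction_on with
  | C a => simpa using (analyticOnNhd_const : AnalyticOnNhd ℂ (fun _ : σ → ℂ => a) Set.univ)
  | add p q hp hq =>
    have := hp.add hq
    simp only [map_add]; exact this
  | mul_X p i hp =>
    have h2 : AnalyticOnNhd ℂ (fun z : σ → ℂ => z i) Set.univ :=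
      (ContinuousLinearMap.proj (R := ℂ) (φ := fun _ : σ => ℂ) i).analyticOnNhd _
    have := hp.mul h2
    simpa [map_mul] using this

lemma vanish_eq_zero {σ : Type*} [Fintype σ] {R : ℝ} (hR : 0 < R) (q : MvPolynomial σ ℂ)
    (h : ∀ z : σ → ℂ, (∀ i, ‖z i‖ ≤ R) → eval z q = 0) : q = 0 := by
  have hA := eval_analytic q
  have h0 : (fun z : σ → ℂ => eval z q) =ᶠ[nhds 0] 0 := by
    have hball : Metric.ball (0 : σ → ℂ) R ∈ nhds 0 := Metric.ball_mem_nhds _ hR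
    filter_upwards [hball] with z hz
    have hz' : ‖z‖ < R := by simpa [Metric.mem_ball] using hz
    exact h z fun i => (norm_le_pi_norm z i).trans hz'.le
  have heq := hA.eqOn_zero_of_preconnected_of_eventuallyEq_zero
    isPreconnected_univ (Set.mem_univ 0) h0
  exact MvPolynomial.funext fun x => by simpa using heq (Set.mem_univ x)

/-! ### coefficient / sup norm comparisons -/

noncomputable def ee (n D : ℕ) (t : σn n → Fin (D + 1)) : σn n →₀ ℕ :=
  Finsupp.equivFunOnFinite.symm fun i => (t i : ℕ)

lemma ee_apply {n D : ℕ} (t : σn n → Fin (D + 1)) (i : σn n) : ee n D t i = (t i : ℕ) := rfl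

lemma ee_inj {n D : ℕ} : Function.Injective (ee n D) := by
  intro a b h
  funext i
  have := congrArg (fun f : σn n →₀ ℕ => f i) h
  simpa [ee_apply, Fin.val_inj] using this

lemma support_sub {n D : ℕ} {q : MvPolynomial (σn n) ℂ} (hq : Good n D q) :
    q.support ⊆ Finset.image (ee n D) Finset.univ := by
  intro s hs
  have h1 : ∀ i, s i ≤ D := fun i => coeff_ne_zero_le hq (mem_support_iff.mp hs) i
  refine Finset.mem_image.mpr ⟨fun i => ⟨s i, by have := h1 i; omega⟩, Finset.mem_univ _, ?_⟩
  ext i; simp [ee_apply]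

lemma eval_expand {n D : ℕ} {q : MvPolynomial (σn n) ℂ} (hq : Good n D q) (z : σn n → ℂ) :
    eval z q = ∑ t : σn n → Fin (D + 1), coeff (ee n D t) q * ∏ i, z i ^ ((t i : ℕ)) := by
  rw [eval_eq']
  rw [Finset.sum_subset (support_sub hq) (fun s _ hs => by
    rw [mem_support_iff, not_not] at hs; rw [hs]; ring)]
  rw [Finset.sum_image (fun x _ y _ h => ee_inj h)]
  apply Finset.sum_congr rfl
  intro t _
  congr 1

lemma sup_of_bdd (n D : ℕ) (R : ℝ) :
    ∃ A : ℝ, 0 < A ∧ ∀ (q : MvPolynomial (σn n) ℂ) (M : ℝ), 0 ≤ M → Good n D q → Bdd n M q →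
      ∀ z : σn n → ℂ, (∀ i, ‖z i‖ ≤ R) → ‖eval z q‖ ≤ A * M := by
  classical
  refine ⟨(Fintype.card (σn n → Fin (D + 1)) : ℝ) * (max 1 R) ^ (Fintype.card (σn n) * D) + 1,
    by positivity, ?_⟩
  intro q M hM hq hb z hz
  rw [eval_expand hq z]
  calc ‖∑ t : σn n → Fin (D + 1), coeff (ee n D t) q * ∏ i, z i ^ ((t i : ℕ))‖
      ≤ ∑ t : σn n → Fin (D + 1), ‖coeff (ee n D t) q * ∏ i, z i ^ ((t i : ℕ))‖ :=
        norm_sum_le _ _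
    _ ≤ ∑ _t : σn n → Fin (D + 1), M * (max 1 R) ^ (Fintype.card (σn n) * D) := by
        apply Finset.sum_le_sum
        intro t _
        rw [norm_mul]
        have h1 : ‖∏ i, z i ^ ((t i : ℕ))‖ ≤ (max 1 R) ^ (Fintype.card (σn n) * D) := by
          rw [norm_prod]
          calc ∏ i, ‖z i ^ ((t i : ℕ))‖ ≤ ∏ i : σn n, (max 1 R) ^ ((t i : ℕ)) := by
                apply Finset.prod_le_prod (fun _ _ => by positivity)
                intro i _
                rw [norm_pow]
                exact pow_le_pow_left₀ (norm_nonneg _) ((hz i).trans (le_max_right _ _)) _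
            _ = (max 1 R) ^ (∑ i : σn n, (t i : ℕ)) := by rw [Finset.prod_pow_eq_pow_sum]
            _ ≤ (max 1 R) ^ (Fintype.card (σn n) * D) := by
                apply pow_le_pow_right₀ (le_max_left _ _)
                calc ∑ i : σn n, (t i : ℕ) ≤ ∑ _i : σn n, D :=
                      Finset.sum_le_sum fun i _ => by omega
                  _ = Fintype.card (σn n) * D := by
                      rw [Finset.sum_const, smul_eq_mul, Finset.card_univ]
        exact mul_le_mul (hb _) h1 (norm_nonneg _) hM
    _ = (Fintype.card (σn n → Fin (D + 1)) : ℝ) * (M * (max 1 R) ^ (Fintype.card (σn n) * D)) := by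
        rw [Finset.sum_const, nsmul_eq_mul, Finset.card_univ]
    _ ≤ ((Fintype.card (σn n → Fin (D + 1)) : ℝ) * (max 1 R) ^ (Fintype.card (σn n) * D) + 1) * M := by
        nlinarith [pow_pos (lt_of_lt_of_le one_pos (le_max_left 1 R)) (Fintype.card (σn n) * D),
          (Nat.cast_pos (α := ℝ)).mpr (Fintype.card_pos (α := σn n → Fin (D + 1)))]

section main1
variable (n D : ℕ) (R : ℝ)

def Kset : Set (σn n → ℂ) := Set.univ.pi fun _ => Metric.closedBall (0 : ℂ) R

lemma mem_Kset {z : σn n → ℂ} : z ∈ Kset n R ↔ ∀ i, ‖z i‖ ≤ R := by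
  simp [Kset, Set.mem_univ_pi, mem_closedBall_zero_iff]

instance : CompactSpace (Kset n R) :=
  isCompact_iff_compactSpace.mp
    (isCompact_univ_pi fun _ => isCompact_closedBall _ _)

/-- monomial as a continuous function on the polydisc -/
noncomputable def monoC (t : σn n → Fin (D + 1)) : C(Kset n R, ℂ) :=
  { toFun := fun z => ∏ i, (z : σn n → ℂ) i ^ ((t i : ℕ))
    continuous_toFun := by
      apply continuous_finset_prod
      intro i _
      exact ((continuous_apply i).comp continuous_subtype_val).pow _ }

noncomputable def Phi : ((σn n → Fin (D + 1)) → ℂ) →ₗ[ℂ] C(Kset n R, ℂ) :=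
  ∑ t : σn n → Fin (D + 1), (LinearMap.proj t).smulRight (monoC n D R t)

lemma Phi_apply (c : (σn n → Fin (D + 1)) → ℂ) (z : Kset n R) :
    Phi n D R c z = ∑ t : σn n → Fin (D + 1), c t * ∏ i, (z : σn n → ℂ) i ^ ((t i : ℕ)) := by
  simp [Phi, monoC, LinearMap.sum_apply, LinearMap.smulRight_apply, LinearMap.proj_apply,
    ContinuousMap.sum_apply, smul_eq_mul]

lemma Phi_inj (hR : 0 < R) : Function.Injective (Phi n D R) := by
  intro c c' h
  rw [← sub_eq_zero] at h ⊢
  set c'' := c - c' with hc''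
  have h0 : Phi n D R c'' = 0 := by rw [map_sub, h]
  set qc : MvPolynomial (σn n) ℂ := ∑ t : σn n → Fin (D + 1), monomial (ee n D t) (c'' t)
    with hqc
  have heval : ∀ z : σn n → ℂ, (∀ i, ‖z i‖ ≤ R) → eval z qc = 0 := by
    intro z hz
    have hz' : z ∈ Kset n R := (mem_Kset n R).mpr hz
    have := congrArg (fun F : C(Kset n R, ℂ) => F ⟨z, hz'⟩) h0
    try dsimp only at this
    rw [Phi_apply] at this
    simp only [ContinuousMap.zero_apply] at this
    rw [hqc, map_sum]
    rw [← this]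
    apply Finset.sum_congr rfl
    intro t _
    rw [eval_monomial]
    congr 1
    rw [Finsupp.prod_pow]
    apply Finset.prod_congr rfl
    intro i _
    rw [ee_apply]
  have hq0 : qc = 0 := vanish_eq_zero hR qc heval
  funext t
  have : coeff (ee n D t) qc = c'' t := by
    rw [hqc, coeff_sum]
    rw [Finset.sum_eq_single t]
    · rw [coeff_monomial, if_pos rfl]
    · intro b _ hb
      rw [coeff_monomial, if_neg (fun hh => hb (ee_inj hh))]
    · intro hh; exact absurd (Finset.mem_univ t) hh
  rw [hq0] at this
  simp only [coeff_zero] at this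
  simpa [Pi.zero_apply] using this.symm

lemma bdd_of_sup (hR : 0 < R) :
    ∃ A : ℝ, 0 < A ∧ ∀ (q : MvPolynomial (σn n) ℂ) (B : ℝ), 0 ≤ B → Good n D q →
      (∀ z : σn n → ℂ, (∀ i, ‖z i‖ ≤ R) → ‖eval z q‖ ≤ B) → Bdd n (A * B) q := by
  classical
  have hinj := Phi_inj n D R hR
  let e := LinearEquiv.ofInjective (Phi n D R) hinj
  have hcont : Continuous (e.symm.toLinearMap) := e.symm.toLinearMap.continuous_of_finiteDimensional
  let g : LinearMap.range (Phi n D R) →L[ℂ] ((σn n → Fin (D + 1)) → ℂ) :=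
    { toLinearMap := e.symm.toLinearMap, cont := hcont }
  refine ⟨‖g‖ + 1, by positivity, ?_⟩
  intro q B hB hq hsup
  set c : (σn n → Fin (D + 1)) → ℂ := fun t => coeff (ee n D t) q with hc
  have hF : ∀ z : Kset n R, Phi n D R c z = eval (z : σn n → ℂ) q := by
    intro z
    rw [Phi_apply, eval_expand hq]
  have hnormF : ‖Phi n D R c‖ ≤ B := by
    rw [ContinuousMap.norm_le _ hB]
    intro z
    rw [hF z]
    exact hsup _ ((mem_Kset n R).mp z.2)
  have hgc : g ⟨Phi n D R c, LinearMap.mem_range_self _ c⟩ = c := by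
    have h1 : e c = ⟨Phi n D R c, LinearMap.mem_range_self _ c⟩ := rfl
    have := e.symm_apply_apply c
    rw [h1] at this
    exact this
  have hcb : ‖c‖ ≤ ‖g‖ * B := by
    calc ‖c‖ = ‖g ⟨Phi n D R c, LinearMap.mem_range_self _ c⟩‖ := by rw [hgc]
      _ ≤ ‖g‖ * ‖(⟨Phi n D R c, LinearMap.mem_range_self _ c⟩ : LinearMap.range (Phi n D R))‖ :=
          g.le_opNorm _
      _ = ‖g‖ * ‖Phi n D R c‖ := rfl
      _ ≤ ‖g‖ * B := mul_le_mul_of_nonneg_left hnormF (ContinuousLinearMap.opNorm_nonneg g)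
  intro s
  by_cases hs : ∀ i, s i ≤ D
  · set t : σn n → Fin (D + 1) := fun i => ⟨s i, by have := hs i; omega⟩ with ht
    have hst : s = ee n D t := by ext i; rw [ee_apply]
    rw [hst]
    calc ‖coeff (ee n D t) q‖ = ‖c t‖ := rfl
      _ ≤ ‖c‖ := norm_le_pi_norm c t
      _ ≤ ‖g‖ * B := hcb
      _ ≤ (‖g‖ + 1) * B := by nlinarith [ContinuousLinearMap.opNorm_nonneg g]
  · push_neg at hs
    obtain ⟨i, hi⟩ := hs
    have h0 : coeff s q = 0 := by
      by_contra hcne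
      exact absurd (coeff_ne_zero_le hq hcne i) (by omega)
    rw [h0, norm_zero]
    positivity
end main1

/-! ### misc small lemmas -/

lemma DX_zero_apply {n : ℕ} (f : MvPolynomial (σn n) ℂ) : DX n 0 f = f := by
  have h : (DX (R := ℂ) n 0) = 1 := by
    rw [DX]
    apply List.prod_eq_one
    intro x hx
    rw [List.mem_map] at hx
    obtain ⟨i, _, rfl⟩ := hx
    simp
  rw [h, Module.End.one_apply]

lemma DXi_zero_apply {n : ℕ} (f : MvPolynomial (σn n) ℂ) : DXi n 0 f = f := by
  have h : (DXi (R := ℂ) n 0) = 1 := by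
    rw [DXi]
    apply List.prod_eq_one
    intro x hx
    rw [List.mem_map] at hx
    obtain ⟨i, _, rfl⟩ := hx
    simp
  rw [h, Module.End.one_apply]

lemma norm_calpha {n : ℕ} (α : Fin n →₀ ℕ) :
    ‖((-1 : ℂ) ^ (α.sum fun _ k => k)) * (α.prod fun _ k => (k.factorial : ℂ))⁻¹‖ ≤ 1 := by
  rw [norm_mul, norm_pow, norm_neg, norm_one, one_pow, one_mul]
  have h1 : (α.prod fun _ k => (k.factorial : ℂ)) =
      ((α.prod fun _ k => k.factorial : ℕ) : ℂ) := by
    rw [Finsupp.prod, Finsupp.prod, Nat.cast_prod]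
  rw [h1, norm_inv, Complex.norm_natCast]
  have h2 : 1 ≤ (α.prod fun _ k => k.factorial : ℕ) := by
    rw [Finsupp.prod]
    exact Finset.one_le_prod' fun i _ => Nat.one_le_iff_ne_zero.mpr (Nat.factorial_ne_zero _)
  rw [inv_le_one_iff₀]
  right
  exact_mod_cast h2

lemma one_le_msum {n : ℕ} {α : Fin n →₀ ℕ} (hα : α ≠ 0) : 1 ≤ α.sum fun _ k => k := by
  by_contra h
  push_neg at h
  apply hα
  have h0 : (α.sum fun _ k => k) = 0 := by omega
  rw [Finsupp.sum] at h0
  ext i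
  by_cases hi : i ∈ α.support
  · exact Finset.sum_eq_zero_iff.mp h0 i hi
  · simpa [Finsupp.mem_support_iff] using hi

lemma msum_cast {n : ℕ} (α : Fin n →₀ ℕ) :
    (α.sum fun _ k => (k : ℤ)) = ((α.sum fun _ k => k : ℕ) : ℤ) := by
  rw [Finsupp.sum, Finsupp.sum, Nat.cast_sum]

lemma listsum_le {n D : ℕ} {α : Fin n →₀ ℕ} (hα : ∀ i, α i ≤ D) :
    (((List.finRange n).map fun i => α i).sum) ≤ n * D := by
  have := List.sum_le_card_nsmul (((List.finRange n).map fun i => α i)) D (by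
    intro x hx
    rw [List.mem_map] at hx
    obtain ⟨i, _, rfl⟩ := hx
    exact hα i)
  simpa [List.length_map, List.length_finRange, smul_eq_mul] using this


/-- the Borel-type estimates `sup_K |p_j| ≤ C^{-j}(-j)!` (`j ≤ 0`) on
the homogeneous components, in the polynomial model with degrees bounded by `D` in
each variable, are stable under the transposition formula: the components of `ᵗp`
satisfy estimates of the same type with a possibly larger constant `C'`
(depending on `C`, `D`, `n`, `K`). -/
theorem transposition_estimate (n D : ℕ) (R C : ℝ) (hR : 0 < R) (hC : 0 < C)
    (p : ℤ → MvPolynomial (Fin n ⊕ Fin n) ℂ)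
    (hvanish : ∀ j : ℤ, 0 < j → p j = 0)
    (hdeg : ∀ (j : ℤ) (i : Fin n ⊕ Fin n), degreeOf i (p j) ≤ D)
    (hbound : ∀ j : ℤ, j ≤ 0 → ∀ z : (Fin n ⊕ Fin n) → ℂ, (∀ i, ‖z i‖ ≤ R) →
      ‖eval z (p j)‖ ≤ C ^ (-j).toNat * ((-j).toNat.factorial : ℝ)) :
    ∃ C' : ℝ, 0 < C' ∧ ∀ j : ℤ, j ≤ 0 → ∀ z : (Fin n ⊕ Fin n) → ℂ, (∀ i, ‖z i‖ ≤ R) →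
      ‖eval z (transpComp n p j)‖ ≤ C' ^ (-j).toNat * ((-j).toNat.factorial : ℝ) := by
  classical
  obtain ⟨A₁, hA₁, hmain1⟩ := bdd_of_sup n D R hR
  obtain ⟨A₃, hA₃, hmain3⟩ := sup_of_bdd n D R
  set Dbig : ℝ := (max 1 (D : ℝ)) ^ (n * D) with hDbig
  have hDbig0 : 0 < Dbig := by positivity
  set Sfin : Finset (Fin n →₀ ℕ) :=
    Finset.Iic (Finsupp.equivFunOnFinite.symm fun _ : Fin n => D) with hSfin
  have hmemS : ∀ α : Fin n →₀ ℕ, α ∈ Sfin ↔ ∀ i, α i ≤ D := by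
    intro α
    rw [hSfin, Finset.mem_Iic, Finsupp.le_def]
    constructor <;> intro h i <;> simpa using h i
  set A : ℝ := A₃ * (Dbig * (Dbig * A₁)) with hA
  have hA0 : 0 < A := by positivity
  set K0 : ℝ := (Sfin.card : ℝ) * A with hK0
  have hK00 : 0 ≤ K0 := by positivity
  set Cm := max C 1 with hCm
  have hCm1 : 1 ≤ Cm := le_max_right _ _
  have hCmC : C ≤ Cm := le_max_left _ _
  have hCm0 : 0 < Cm := by positivity
  refine ⟨(1 + K0) * Cm, by positivity, ?_⟩
  intro j hj z hz
  set k := (-j).toNat with hk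
  have hjk : j = -(k : ℤ) := by omega
  -- the Dbig bound for DX/DXi exponents
  have hDpow : ∀ (α : Fin n →₀ ℕ), (∀ i, α i ≤ D) →
      (D : ℝ) ^ ((((List.finRange n).map fun i => α i)).sum) ≤ Dbig := by
    intro α hα
    calc (D : ℝ) ^ ((((List.finRange n).map fun i => α i)).sum)
        ≤ (max 1 (D : ℝ)) ^ ((((List.finRange n).map fun i => α i)).sum) :=
          pow_le_pow_left₀ (by positivity) (le_max_right _ _) _
      _ ≤ Dbig := by
          rw [hDbig]
          exact pow_le_pow_right₀ (le_max_left _ _) (listsum_le hα)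
  -- uniform operator bound
  have hop : ∀ (α : Fin n →₀ ℕ), (∀ i, α i ≤ D) →
      ∀ (q : MvPolynomial (σn n) ℂ) (B : ℝ), 0 ≤ B → Good n D q →
      (∀ z' : σn n → ℂ, (∀ i, ‖z' i‖ ≤ R) → ‖eval z' q‖ ≤ B) →
      ∀ z' : σn n → ℂ, (∀ i, ‖z' i‖ ≤ R) →
        ‖eval z' (DXi n α (DX n α (negXi n q)))‖ ≤ A * B := by
    intro α hα q B hB hq hsup z' hz'
    have hbdd : Bdd n (A₁ * B) q := hmain1 q B hB hq hsup
    have hg1 : Good n D (negXi n q) := good_negXi hq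
    have hb1 : Bdd n (A₁ * B) (negXi n q) := bdd_negXi hbdd
    have hg2 : Good n D (DX n α (negXi n q)) :=
      good_prodlist Sum.inl (fun i => α i) (List.finRange n) hg1
    have hb2 : Bdd n (Dbig * (A₁ * B)) (DX n α (negXi n q)) := by
      intro s
      refine (bdd_prodlist Sum.inl (fun i => α i) (List.finRange n)
        (by positivity) hg1 hb1 s).trans ?_
      exact mul_le_mul_of_nonneg_right (hDpow α hα) (by positivity)
    have hg3 : Good n D (DXi n α (DX n α (negXi n q))) :=
      good_prodlist Sum.inr (fun i => α i) (List.finRange n) hg2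
    have hb3 : Bdd n (Dbig * (Dbig * (A₁ * B))) (DXi n α (DX n α (negXi n q))) := by
      intro s
      refine (bdd_prodlist Sum.inr (fun i => α i) (List.finRange n)
        (by positivity) hg2 hb2 s).trans ?_
      exact mul_le_mul_of_nonneg_right (hDpow α hα) (by positivity)
    calc ‖eval z' (DXi n α (DX n α (negXi n q)))‖
        ≤ A₃ * (Dbig * (Dbig * (A₁ * B))) :=
          hmain3 _ _ (by positivity) hg3 hb3 z' hz'
      _ = A * B := by rw [hA]; ring
  -- reduce the finsum to a finite sum
  have htc : transpComp n p j = ∑ α ∈ Sfin,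
      (((-1 : ℂ) ^ (α.sum fun _ k => k)) * (α.prod fun _ k => (k.factorial : ℂ))⁻¹) •
        DXi n α (DX n α (negXi n (p (j + (α.sum fun _ k => (k : ℤ)))))) := by
    rw [transpComp]
    apply finsum_eq_finset_sum_of_support_subset
    intro α hα
    rw [Function.mem_support] at hα
    rw [Finset.mem_coe]
    by_contra hmem
    apply hα
    have hex : ∃ i, D < α i := by
      by_contra hall
      push_neg at hall
      exact hmem ((hmemS α).mpr hall)
    obtain ⟨i₀, hi₀⟩ := hex
    have hDXz : DX n α (negXi n (p (j + (α.sum fun _ k => (k : ℤ))))) = 0 :=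
      zero_prodlist Sum.inl (fun i => α i) (List.finRange n)
        (good_negXi fun i => hdeg _ i) i₀ (List.mem_finRange i₀) hi₀
    rw [hDXz, map_zero, smul_zero]
  have h0S : (0 : Fin n →₀ ℕ) ∈ Sfin := (hmemS 0).mpr (by simp)
  rw [htc, map_sum]
  rw [← Finset.add_sum_erase _ (fun α =>
    eval z ((((-1 : ℂ) ^ (α.sum fun _ k => k)) * (α.prod fun _ k => (k.factorial : ℂ))⁻¹) •
      DXi n α (DX n α (negXi n (p (j + (α.sum fun _ k => (k : ℤ)))))))) h0S]
  -- the α = 0 term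
  have hterm0 : ‖eval z ((((-1 : ℂ) ^ ((0 : Fin n →₀ ℕ).sum fun _ k => k)) *
      ((0 : Fin n →₀ ℕ).prod fun _ k => (k.factorial : ℂ))⁻¹) •
      DXi n 0 (DX n 0 (negXi n (p (j + ((0 : Fin n →₀ ℕ).sum fun _ k => (k : ℤ)))))))‖
      ≤ C ^ k * (k.factorial : ℝ) := by
    rw [Finsupp.sum_zero_index, Finsupp.sum_zero_index, Finsupp.prod_zero_index]
    rw [add_zero, DX_zero_apply, DXi_zero_apply]
    simp only [pow_zero, inv_one, mul_one, one_smul]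
    rw [eval_negXi]
    set z' : σn n → ℂ := Sum.elim (fun i => z (Sum.inl i)) fun i => -z (Sum.inr i) with hz'
    have hz'R : ∀ i, ‖z' i‖ ≤ R := by
      intro i
      cases i with
      | inl i => exact hz (Sum.inl i)
      | inr i => rw [hz']; simpa [norm_neg] using hz (Sum.inr i)
    have := hbound j hj z' hz'R
    rwa [← hk] at this
  -- terms with α ≠ 0
  have hrest : ∀ α ∈ Sfin.erase 0,
      ‖eval z ((((-1 : ℂ) ^ (α.sum fun _ k => k)) * (α.prod fun _ k => (k.factorial : ℂ))⁻¹) •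
        DXi n α (DX n α (negXi n (p (j + (α.sum fun _ k => (k : ℤ)))))))‖
      ≤ (if k = 0 then 0 else A * (Cm ^ k * (k.factorial : ℝ))) := by
    intro α hαe
    have hα0 : α ≠ 0 := Finset.ne_of_mem_erase hαe
    have hαS : α ∈ Sfin := Finset.mem_of_mem_erase hαe
    have hαD : ∀ i, α i ≤ D := (hmemS α).mp hαS
    set m : ℕ := α.sum fun _ x => x with hm
    have hm1 : 1 ≤ m := one_le_msum hα0
    have hcast : (α.sum fun _ x => (x : ℤ)) = (m : ℤ) := msum_cast α
    by_cases hmk : k < m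
    · have hpz : p (j + (α.sum fun _ x => (x : ℤ))) = 0 := by
        apply hvanish
        omega
      rw [hpz, map_zero, map_zero, map_zero, smul_zero, map_zero, norm_zero]
      split <;> positivity
    · push_neg at hmk
      have hk0 : k ≠ 0 := by omega
      rw [if_neg hk0]
      set j' : ℤ := j + (α.sum fun _ x => (x : ℤ)) with hj'
      have hj'0 : j' ≤ 0 := by omega
      have hj'toNat : (-j').toNat = k - m := by omega
      have hsupq : ∀ z' : σn n → ℂ, (∀ i, ‖z' i‖ ≤ R) →
          ‖eval z' (p j')‖ ≤ C ^ (k - m) * ((k - m).factorial : ℝ) := by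
        intro z' hz'
        have := hbound j' hj'0 z' hz'
        rwa [hj'toNat] at this
      have hB0 : (0 : ℝ) ≤ C ^ (k - m) * ((k - m).factorial : ℝ) := by positivity
      have hEop := hop α hαD (p j') _ hB0 (fun i => hdeg _ i) hsupq z hz
      rw [smul_eval, norm_mul]
      calc ‖((-1 : ℂ) ^ (α.sum fun _ x => x)) * (α.prod fun _ x => (x.factorial : ℂ))⁻¹‖ *
            ‖eval z (DXi n α (DX n α (negXi n (p j'))))‖
          ≤ 1 * (A * (C ^ (k - m) * ((k - m).factorial : ℝ))) :=
            mul_le_mul (norm_calpha α) hEop (norm_nonneg _) zero_le_one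
        _ = A * (C ^ (k - m) * ((k - m).factorial : ℝ)) := by ring
        _ ≤ A * (Cm ^ k * (k.factorial : ℝ)) := by
            apply mul_le_mul_of_nonneg_left _ hA0.le
            apply mul_le_mul
            · calc C ^ (k - m) ≤ Cm ^ (k - m) := pow_le_pow_left₀ hC.le hCmC _
                _ ≤ Cm ^ k := pow_le_pow_right₀ hCm1 (by omega)
            · exact_mod_cast Nat.factorial_le (by omega)
            · positivity
            · positivity
  -- put everything together
  have hsum : ‖∑ α ∈ Sfin.erase 0,
      eval z ((((-1 : ℂ) ^ (α.sum fun _ k => k)) * (α.prod fun _ k => (k.factorial : ℂ))⁻¹) •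
        DXi n α (DX n α (negXi n (p (j + (α.sum fun _ k => (k : ℤ)))))))‖
      ≤ (Sfin.card : ℝ) * (if k = 0 then 0 else A * (Cm ^ k * (k.factorial : ℝ))) := by
    calc ‖∑ α ∈ Sfin.erase 0, _‖ ≤ ∑ α ∈ Sfin.erase 0,
          ‖eval z ((((-1 : ℂ) ^ (α.sum fun _ k => k)) *
            (α.prod fun _ k => (k.factorial : ℂ))⁻¹) •
            DXi n α (DX n α (negXi n (p (j + (α.sum fun _ k => (k : ℤ)))))))‖ :=
        norm_sum_le _ _
      _ ≤ ∑ _α ∈ Sfin.erase 0, (if k = 0 then 0 else A * (Cm ^ k * (k.factorial : ℝ))) :=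
        Finset.sum_le_sum hrest
      _ = ((Sfin.erase 0).card : ℝ) * (if k = 0 then 0 else A * (Cm ^ k * (k.factorial : ℝ))) := by
        rw [Finset.sum_const, nsmul_eq_mul]
      _ ≤ (Sfin.card : ℝ) * (if k = 0 then 0 else A * (Cm ^ k * (k.factorial : ℝ))) := by
        apply mul_le_mul_of_nonneg_right
        · exact_mod_cast Finset.card_le_card (Finset.erase_subset _ _)
        · split <;> positivity
  calc ‖_ + ∑ α ∈ Sfin.erase 0, _‖
      ≤ C ^ k * (k.factorial : ℝ) +
        (Sfin.card : ℝ) * (if k = 0 then 0 else A * (Cm ^ k * (k.factorial : ℝ))) := by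
        exact (norm_add_le _ _).trans (add_le_add hterm0 hsum)
    _ ≤ ((1 + K0) * Cm) ^ k * (k.factorial : ℝ) := by
        by_cases hk0 : k = 0
        · rw [if_pos hk0, hk0]
          norm_num
        · rw [if_neg hk0]
          have h1 : C ^ k ≤ Cm ^ k := pow_le_pow_left₀ hC.le hCmC _
          have h2 : (1 + K0) ≤ (1 + K0) ^ k := le_self_pow₀ (by linarith) hk0
          have hfac : (0 : ℝ) ≤ (k.factorial : ℝ) := by positivity
          have hCmk : (0 : ℝ) ≤ Cm ^ k := by positivity
          calc C ^ k * (k.factorial : ℝ) + (Sfin.card : ℝ) * (A * (Cm ^ k * (k.factorial : ℝ)))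
              = C ^ k * (k.factorial : ℝ) + K0 * (Cm ^ k * (k.factorial : ℝ)) := by
                rw [hK0]; ring
            _ ≤ Cm ^ k * (k.factorial : ℝ) + K0 * (Cm ^ k * (k.factorial : ℝ)) := by
                have := mul_le_mul_of_nonneg_right h1 hfac
                linarith
            _ = (1 + K0) * (Cm ^ k * (k.factorial : ℝ)) := by ring
            _ ≤ (1 + K0) ^ k * (Cm ^ k * (k.factorial : ℝ)) := by
                apply mul_le_mul_of_nonneg_right h2 (by positivity)
            _ = ((1 + K0) * Cm) ^ k * (k.factorial : ℝ) := by
                rw [mul_pow]; ring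
end
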